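/- Let H ∈ (1/2, 1) and k ≥ 2. The integral J_k = ∫_{[s,t]^k} |x₁ − x₂|^{H−1} |x₂ − x₃|^{H−1} ⋯ |x_{k−1} − x_k|^{H−1} |x_k − x₁|^{H−1} dx₁ ⋯ dx_k is finite for every bounded interval [s,t], and there exists C(s,t) > 0 with J_k ≤ C(s,t)^k for all k ≥ 2. -/

import Mathlib

open MeasureTheory Set
open scoped ENNReal

/-- cyclic successor on `Fin k` -/
def cyc (k : ℕ) (hk : 0 < k) (j : Fin k) : Fin k :=
  ⟨(j.1 + 1) % k, Nat.mod_lt _ hk⟩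

namespace Stmt8Aux

noncomputable def ker (β u v : ℝ) : ℝ≥0∞ := ENNReal.ofReal (|u - v| ^ β)

lemma ker_meas {α : Type*} [MeasurableSpace α] {β : ℝ} {f g : α → ℝ}
    (hf : Measurable f) (hg : Measurable g) :
    Measurable fun a => ker β (f a) (g a) :=
  ENNReal.measurable_ofReal.comp ((hf.sub hg).abs.pow measurable_const)

lemma ker_comm (β u v : ℝ) : ker β u v = ker β v u := by
  simp [ker, abs_sub_comm]

lemma ker_sq (β u v : ℝ) (hβ : β ≠ 0) :
    ker β u v * ker β u v = ENNReal.ofReal (|u - v| ^ (2 * β)) := by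
  rw [ker, ← ENNReal.ofReal_mul (Real.rpow_nonneg (abs_nonneg _) _),
    ← Real.rpow_add' (abs_nonneg _) (by simpa using (by simpa using hβ : ¬ β = 0))]
  ring_nf

lemma amgm (a b : ℝ≥0∞) : a * b ≤ a * a + b * b := by
  rcases le_total a b with h | h
  · exact (mul_le_mul_left h b).trans le_add_self
  · exact (mul_le_mul_right h a).trans le_self_add

noncomputable def epath (β : ℝ) (n : ℕ) (x : Fin (n + 1) → ℝ) : ℝ≥0∞ :=
  ∏ j : Fin n, ker β (x j.castSucc) (x j.succ)

lemma epath_meas (β : ℝ) (n : ℕ) : Measurable (epath β n) :=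
  Finset.measurable_prod _ fun j _ =>
    ker_meas (measurable_pi_apply _) (measurable_pi_apply _)

lemma epath_cons (β : ℝ) (n : ℕ) (u : ℝ) (w : Fin (n + 1) → ℝ) :
    epath β (n + 1) (Fin.cons u w) = ker β u (w 0) * epath β n w := by
  rw [epath, Fin.prod_univ_succ]
  refine congrArg₂ (· * ·) ?_ ?_
  · simp [Fin.cons_zero, Fin.cons_succ]
  · rw [epath]
    refine Finset.prod_congr rfl fun j _ => ?_
    have h1 : (j.succ : Fin (n + 1)).castSucc = (j.castSucc : Fin (n + 1)).succ := rfl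
    rw [h1, Fin.cons_succ, Fin.cons_succ]

lemma peel (μ : Measure ℝ) [SigmaFinite μ] (n : ℕ) (F : (Fin (n + 1) → ℝ) → ℝ≥0∞)
    (hF : Measurable F) :
    ∫⁻ x, F x ∂(Measure.pi fun _ : Fin (n + 1) => μ)
      = ∫⁻ u, ∫⁻ y, F (Fin.cons u y) ∂(Measure.pi fun _ : Fin n => μ) ∂μ := by
  have h := measurePreserving_piFinSuccAbove (fun _ : Fin (n + 1) => μ) 0
  set e := MeasurableEquiv.piFinSuccAbove (fun _ : Fin (n + 1) => ℝ) 0 with he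
  have hsymm : ∀ p : ℝ × (Fin n → ℝ), e.symm p = Fin.cons p.1 p.2 := by
    intro p
    simp [he, MeasurableEquiv.piFinSuccAbove, Fin.insertNthEquiv, Fin.insertNth_zero']
  have hg : Measurable fun p : ℝ × (Fin n → ℝ) => F (e.symm p) :=
    hF.comp e.symm.measurable
  have key := h.lintegral_comp hg
  simp only [MeasurableEquiv.symm_apply_apply] at key
  rw [key, lintegral_prod _ hg.aemeasurable]
  simp only [hsymm]

lemma restrict_pi (μ : Measure ℝ) [SigmaFinite μ] (s : Set ℝ) (hs : MeasurableSet s) (k : ℕ) :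
    (Measure.pi fun _ : Fin k => μ).restrict (Set.pi Set.univ fun _ => s)
      = Measure.pi (fun _ : Fin k => μ.restrict s) := by
  refine (Measure.pi_eq fun t ht => ?_).symm
  rw [Measure.restrict_apply (MeasurableSet.univ_pi ht), ← Set.pi_inter_distrib,
    Measure.pi_pi]
  simp [Measure.restrict_apply (ht _)]

section OneDim

lemma abs_rpow_II0 (γ L : ℝ) (hγ : -1 < γ) (hL : 0 ≤ L) :
    IntervalIntegrable (fun x => |x| ^ γ) volume 0 L := by
  refine (intervalIntegral.intervalIntegrable_rpow' hγ (a := 0) (b := L)).congr ?_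
  intro x hx
  rw [Set.uIoc_of_le hL, Set.mem_Ioc] at hx
  simp [abs_of_pos hx.1]

lemma abs_rpow_II (γ L : ℝ) (hγ : -1 < γ) (hL : 0 ≤ L) :
    IntervalIntegrable (fun x => |x| ^ γ) volume (-L) L := by
  refine IntervalIntegrable.trans (b := 0) ?_ (abs_rpow_II0 γ L hγ hL)
  have := (IntervalIntegrable.iff_comp_neg (f := fun x => |x| ^ γ)
    (a := 0) (b := L)).1 (abs_rpow_II0 γ L hγ hL)
  simpa using this.symm

lemma abs_rpow_int (γ L : ℝ) (hγ : -1 < γ) (hL : 0 ≤ L) :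
    ∫ x in (-L)..L, |x| ^ γ = 2 * L ^ (γ + 1) / (γ + 1) := by
  have h1 : ∫ x in (0:ℝ)..L, |x| ^ γ = L ^ (γ + 1) / (γ + 1) := by
    rw [intervalIntegral.integral_congr (g := fun x => x ^ γ) ?_,
      integral_rpow (Or.inl hγ)]
    · rw [Real.zero_rpow (by linarith), sub_zero]
    · intro x hx
      rw [Set.uIcc_of_le hL, Set.mem_Icc] at hx
      simp [abs_of_nonneg hx.1]
  have h2 : ∫ x in (-L)..(0:ℝ), |x| ^ γ = L ^ (γ + 1) / (γ + 1) := by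
    have := intervalIntegral.integral_comp_neg (a := (0:ℝ)) (b := L)
      (fun x => |x| ^ γ)
    simp only [abs_neg, neg_zero] at this
    rw [← this, h1]
  rw [← intervalIntegral.integral_add_adjacent_intervals (b := (0:ℝ))
    ((abs_rpow_II γ L hγ hL).mono_set
      (by rw [Set.uIcc_of_le (by linarith), Set.uIcc_of_le (by linarith)]
          exact Set.Icc_subset_Icc le_rfl hL))
    (abs_rpow_II0 γ L hγ hL), h1, h2]
  ring

lemma one_dim (γ s t y : ℝ) (hγ : -1 < γ) (hy : y ∈ Icc s t) :
    ∫⁻ x in Icc s t, ENNReal.ofReal (|x - y| ^ γ)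
      ≤ ENNReal.ofReal (2 * (t - s) ^ (γ + 1) / (γ + 1)) := by
  have hst : s ≤ t := le_trans hy.1 hy.2
  set L := t - s with hLdef
  have hL : 0 ≤ L := by simp [hLdef]; linarith
  have hsub : Icc s t ⊆ Icc (y - L) (y + L) :=
    Icc_subset_Icc (by simp [hLdef]; linarith [hy.2]) (by simp [hLdef]; linarith [hy.1])
  refine le_trans (lintegral_mono_set hsub) (le_of_eq ?_)
  have hII : IntervalIntegrable (fun x => |x - y| ^ γ) volume (y - L) (y + L) := by
    have := (abs_rpow_II γ L hγ hL).comp_sub_right y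
    simpa [add_comm, sub_eq_add_neg] using this
  have hInt : IntegrableOn (fun x => |x - y| ^ γ) (Icc (y - L) (y + L)) volume := by
    rw [integrableOn_Icc_iff_integrableOn_Ioc]
    exact (intervalIntegrable_iff_integrableOn_Ioc_of_le (by linarith)).1 hII
  rw [← ofReal_integral_eq_lintegral_ofReal hInt
      (ae_of_all _ fun x => Real.rpow_nonneg (abs_nonneg _) _)]
  congr 1
  rw [MeasureTheory.integral_Icc_eq_integral_Ioc,
    ← intervalIntegral.integral_of_le (by linarith)]
  have := intervalIntegral.integral_comp_sub_right (a := y - L) (b := y + L)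
    (fun u => |u| ^ γ) y
  simp only [sub_sub_cancel_left, add_sub_cancel_left] at this
  rw [this]
  exact abs_rpow_int γ L hγ hL

end OneDim

section Bounds

variable (β s t : ℝ)

lemma bound1 {y : ℝ} (hβ1 : -1 < β) (hy : y ∈ Icc s t) :
    ∫⁻ u in Icc s t, ker β y u
      ≤ ENNReal.ofReal (2 * (t - s) ^ (β + 1) / (β + 1)) := by
  have : ∀ u : ℝ, ker β y u = ENNReal.ofReal (|u - y| ^ β) := fun u => by
    rw [ker_comm]; rfl
  simp_rw [this]
  exact one_dim β s t y hβ1 hy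

lemma bound2 {y z : ℝ} (hβ2 : -1 < 2 * β) (hβ0 : β ≠ 0)
    (hy : y ∈ Icc s t) (hz : z ∈ Icc s t) :
    ∫⁻ u in Icc s t, ker β y u * ker β u z
      ≤ ENNReal.ofReal (2 * (t - s) ^ (2 * β + 1) / (2 * β + 1))
        + ENNReal.ofReal (2 * (t - s) ^ (2 * β + 1) / (2 * β + 1)) := by
  calc ∫⁻ u in Icc s t, ker β y u * ker β u z
      ≤ ∫⁻ u in Icc s t, (ker β y u * ker β y u + ker β u z * ker β u z) :=
        lintegral_mono fun u => amgm _ _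
    _ = (∫⁻ u in Icc s t, ker β y u * ker β y u)
          + ∫⁻ u in Icc s t, ker β u z * ker β u z := by
        exact lintegral_add_left
          ((ker_meas measurable_const measurable_id).mul
            (ker_meas measurable_const measurable_id)) _
    _ ≤ _ := by
        gcongr
        · have : ∀ u : ℝ, ker β y u * ker β y u
              = ENNReal.ofReal (|u - y| ^ (2 * β)) := fun u => by
            rw [ker_comm, ker_sq β u y hβ0]
          simp_rw [this]
          exact one_dim (2 * β) s t y hβ2 hy
        · have : ∀ u : ℝ, ker β u z * ker β u z
              = ENNReal.ofReal (|u - z| ^ (2 * β)) := fun u => ker_sq β u z hβ0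
          simp_rw [this]
          exact one_dim (2 * β) s t z hβ2 hz

noncomputable def chainF (n : ℕ) (y z : ℝ) (x : Fin (n + 1) → ℝ) : ℝ≥0∞ :=
  ker β y (x 0) * (epath β n x * ker β (x (Fin.last n)) z)

lemma chainF_meas (n : ℕ) (y z : ℝ) : Measurable (chainF β n y z) :=
  (ker_meas measurable_const (measurable_pi_apply 0)).mul
    ((epath_meas β n).mul (ker_meas (measurable_pi_apply _) measurable_const))

lemma chain (hβ1 : -1 < β) (hβ2 : -1 < 2 * β) (hβ0 : β ≠ 0) :
    ∀ n, ∀ y z : ℝ, y ∈ Icc s t → z ∈ Icc s t →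
      ∫⁻ x, chainF β n y z x
          ∂(Measure.pi fun _ : Fin (n + 1) => volume.restrict (Icc s t))
        ≤ (ENNReal.ofReal (2 * (t - s) ^ (2 * β + 1) / (2 * β + 1))
            + ENNReal.ofReal (2 * (t - s) ^ (2 * β + 1) / (2 * β + 1)))
          * (ENNReal.ofReal (2 * (t - s) ^ (β + 1) / (β + 1))) ^ n := by
  intro n
  induction n with
  | zero =>
      intro y z hy hz
      rw [peel _ 0 _ (chainF_meas β 0 y z)]
      have hrw : ∀ (u : ℝ) (w : Fin 0 → ℝ),
          chainF β 0 y z (Fin.cons u w) = ker β y u * ker β u z := by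
        intro u w
        have h0 : (Fin.last 0 : Fin 1) = 0 := rfl
        simp [chainF, epath, h0]
      simp_rw [hrw, lintegral_const]
      have hpi : (Measure.pi fun _ : Fin 0 => volume.restrict (Icc s t)) Set.univ = 1 := by
        rw [Measure.pi_univ]; simp
      simp_rw [hpi, mul_one, pow_zero]
      rw [mul_one]
      exact bound2 β s t hβ2 hβ0 hy hz
  | succ n ih =>
      intro y z hy hz
      rw [peel _ (n + 1) _ (chainF_meas β (n + 1) y z)]
      have hrw : ∀ (u : ℝ) (w : Fin (n + 1) → ℝ),
          chainF β (n + 1) y z (Fin.cons u w) = ker β y u * chainF β n u z w := by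
        intro u w
        have hl : (Fin.cons u w : Fin (n+2) → ℝ) (Fin.last (n + 1)) = w (Fin.last n) := by
          rw [← Fin.succ_last, Fin.cons_succ]
        simp only [chainF, Fin.cons_zero, epath_cons, hl, mul_assoc]
      simp_rw [hrw]
      calc ∫⁻ u in Icc s t, ∫⁻ w, ker β y u * chainF β n u z w
              ∂(Measure.pi fun _ : Fin (n + 1) => volume.restrict (Icc s t))
          = ∫⁻ u in Icc s t, ker β y u * ∫⁻ w, chainF β n u z w
              ∂(Measure.pi fun _ : Fin (n + 1) => volume.restrict (Icc s t)) := by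
            refine lintegral_congr fun u => ?_
            exact lintegral_const_mul _ (chainF_meas β n u z)
        _ ≤ ∫⁻ u in Icc s t, ker β y u *
              ((ENNReal.ofReal (2 * (t - s) ^ (2 * β + 1) / (2 * β + 1))
                + ENNReal.ofReal (2 * (t - s) ^ (2 * β + 1) / (2 * β + 1)))
               * (ENNReal.ofReal (2 * (t - s) ^ (β + 1) / (β + 1))) ^ n) := by
            refine lintegral_mono_ae ?_
            filter_upwards [ae_restrict_mem measurableSet_Icc] with u hu
            exact mul_le_mul_right (ih u z hu hz) _
        _ = (∫⁻ u in Icc s t, ker β y u) *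
              ((ENNReal.ofReal (2 * (t - s) ^ (2 * β + 1) / (2 * β + 1))
                + ENNReal.ofReal (2 * (t - s) ^ (2 * β + 1) / (2 * β + 1)))
               * (ENNReal.ofReal (2 * (t - s) ^ (β + 1) / (β + 1))) ^ n) :=
            lintegral_mul_const _ (ker_meas measurable_const measurable_id)
        _ ≤ ENNReal.ofReal (2 * (t - s) ^ (β + 1) / (β + 1)) *
              ((ENNReal.ofReal (2 * (t - s) ^ (2 * β + 1) / (2 * β + 1))
                + ENNReal.ofReal (2 * (t - s) ^ (2 * β + 1) / (2 * β + 1)))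
               * (ENNReal.ofReal (2 * (t - s) ^ (β + 1) / (β + 1))) ^ n) :=
            mul_le_mul_left (bound1 β s t hβ1 hy) _
        _ = _ := by ring

lemma cycle_prod (n : ℕ) (u : ℝ) (w : Fin (n + 1) → ℝ) :
    (∏ j : Fin (n + 2),
        ker β ((Fin.cons u w : Fin (n+2) → ℝ) j) ((Fin.cons u w : Fin (n+2) → ℝ) (cyc (n + 2) (by omega) j)))
      = chainF β n u u w := by
  have hcyc0 : cyc (n + 2) (by omega) (0 : Fin (n + 2)) = Fin.succ 0 := by
    ext; simp [cyc, Nat.mod_eq_of_lt]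
  have hcycC : ∀ i : Fin n,
      cyc (n + 2) (by omega) ((i.castSucc : Fin (n + 1)).succ)
        = ((i.succ : Fin (n + 1)).succ) := by
    intro i
    ext
    simp only [cyc, Fin.val_succ, Fin.coe_castSucc]
    exact Nat.mod_eq_of_lt (by omega)
  have hcycL : cyc (n + 2) (by omega) ((Fin.last n).succ) = 0 := by
    ext
    simp [cyc, Fin.val_succ, Fin.val_last]
  rw [Fin.prod_univ_succ, Fin.prod_univ_castSucc]
  have e0 : ker β ((Fin.cons u w : Fin (n+2) → ℝ) 0)
      ((Fin.cons u w : Fin (n+2) → ℝ) (cyc (n + 2) (by omega) (0 : Fin (n + 2)))) = ker β u (w 0) := by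
    rw [hcyc0, Fin.cons_zero, Fin.cons_succ]
  have eL : ker β ((Fin.cons u w : Fin (n+2) → ℝ) ((Fin.last n).succ))
      ((Fin.cons u w : Fin (n+2) → ℝ) (cyc (n + 2) (by omega) ((Fin.last n).succ)))
        = ker β (w (Fin.last n)) u := by
    rw [hcycL, Fin.cons_succ, Fin.cons_zero]
  have eM : ∀ i : Fin n, ker β ((Fin.cons u w : Fin (n+2) → ℝ) ((i.castSucc : Fin (n + 1)).succ))
      ((Fin.cons u w : Fin (n+2) → ℝ) (cyc (n + 2) (by omega) ((i.castSucc : Fin (n + 1)).succ)))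
        = ker β (w i.castSucc) (w i.succ) := by
    intro i
    rw [hcycC, Fin.cons_succ, Fin.cons_succ]
  rw [e0, eL]
  rw [Finset.prod_congr rfl fun i _ => eM i]
  rfl

lemma cycle_bound (hβ1 : -1 < β) (hβ2 : -1 < 2 * β) (hβ0 : β ≠ 0) (n : ℕ) :
    ∫⁻ x, (∏ j : Fin (n + 2), ker β (x j) (x (cyc (n + 2) (by omega) j)))
        ∂(Measure.pi fun _ : Fin (n + 2) => volume.restrict (Icc s t))
      ≤ ENNReal.ofReal (t - s) *
          ((ENNReal.ofReal (2 * (t - s) ^ (2 * β + 1) / (2 * β + 1))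
            + ENNReal.ofReal (2 * (t - s) ^ (2 * β + 1) / (2 * β + 1)))
           * (ENNReal.ofReal (2 * (t - s) ^ (β + 1) / (β + 1))) ^ n) := by
  have hFmeas : Measurable fun x : Fin (n + 2) → ℝ =>
      ∏ j : Fin (n + 2), ker β (x j) (x (cyc (n + 2) (by omega) j)) :=
    Finset.measurable_prod _ fun j _ =>
      ker_meas (measurable_pi_apply _) (measurable_pi_apply _)
  rw [peel _ (n + 1) _ hFmeas]
  have hrw : ∀ (u : ℝ) (w : Fin (n + 1) → ℝ),
      (∏ j : Fin (n + 2),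
        ker β ((Fin.cons u w : Fin (n+2) → ℝ) j) ((Fin.cons u w : Fin (n+2) → ℝ) (cyc (n + 2) (by omega) j)))
        = chainF β n u u w := cycle_prod β n
  simp_rw [hrw]
  calc ∫⁻ u in Icc s t, ∫⁻ w, chainF β n u u w
          ∂(Measure.pi fun _ : Fin (n + 1) => volume.restrict (Icc s t))
      ≤ ∫⁻ _u in Icc s t,
          ((ENNReal.ofReal (2 * (t - s) ^ (2 * β + 1) / (2 * β + 1))
            + ENNReal.ofReal (2 * (t - s) ^ (2 * β + 1) / (2 * β + 1)))
           * (ENNReal.ofReal (2 * (t - s) ^ (β + 1) / (β + 1))) ^ n) := by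
        refine lintegral_mono_ae ?_
        filter_upwards [ae_restrict_mem measurableSet_Icc] with u hu
        exact chain β s t hβ1 hβ2 hβ0 n u u hu hu
    _ ≤ _ := by
        rw [lintegral_const, Measure.restrict_apply_univ, Real.volume_Icc]
        rw [mul_comm]

end Bounds

end Stmt8Aux

open Stmt8Aux in
/-- the circular integral `J_k` over `[s,t]^k` is finite and bounded by `C^k`. -/
theorem stmt8 (H : ℝ) (hH : H ∈ Set.Ioo (1/2 : ℝ) 1) (s t : ℝ) (hst : s < t) :
    (∀ k : ℕ, ∀ hk : 2 ≤ k,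
      IntegrableOn
        (fun x : Fin k → ℝ =>
          ∏ j : Fin k, |x j - x (cyc k (by omega) j)| ^ (H - 1))
        (Set.univ.pi fun _ => Set.Icc s t) volume) ∧
    ∃ C : ℝ, 0 < C ∧ ∀ k : ℕ, ∀ hk : 2 ≤ k,
      ∫ x : Fin k → ℝ in Set.univ.pi fun _ => Set.Icc s t,
          ∏ j : Fin k, |x j - x (cyc k (by omega) j)| ^ (H - 1)
        ≤ C ^ k := by
  obtain ⟨hH1, hH2⟩ := hH
  set β := H - 1 with hβdef
  have hβ1 : -1 < β := by rw [hβdef]; linarith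
  have hβ2 : -1 < 2 * β := by rw [hβdef]; linarith
  have hβ0 : β ≠ 0 := by rw [hβdef]; intro h; have : H = 1 := by linarith
                         exact absurd this (by linarith)
  set L := t - s with hLdef
  have hL : 0 < L := by rw [hLdef]; linarith
  set b1 : ℝ := 2 * L ^ (β + 1) / (β + 1) with hb1
  set b2 : ℝ := 2 * L ^ (2 * β + 1) / (2 * β + 1) with hb2
  have hb1nn : 0 ≤ b1 := by
    rw [hb1]
    exact div_nonneg (mul_nonneg (by norm_num) (Real.rpow_nonneg hL.le _)) (by linarith)
  have hb2nn : 0 ≤ b2 := by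
    rw [hb2]
    exact div_nonneg (mul_nonneg (by norm_num) (Real.rpow_nonneg hL.le _)) (by linarith)
  set C : ℝ := max b1 1 * max (L * (2 * b2)) 1 with hC
  have hCpos : 0 < C := by
    rw [hC]
    exact mul_pos (lt_of_lt_of_le one_pos (le_max_right _ _))
      (lt_of_lt_of_le one_pos (le_max_right _ _))
  have hmeas : ∀ n : ℕ, Measurable (fun x : Fin (n + 2) → ℝ =>
      ∏ j : Fin (n + 2), |x j - x (cyc (n + 2) (by omega) j)| ^ β) := fun n =>
    Finset.measurable_prod _ fun j _ =>
      ((measurable_pi_apply j).sub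
        (measurable_pi_apply (cyc (n + 2) (by omega) j))).abs.pow measurable_const
  have hnn : ∀ n : ℕ, ∀ x : Fin (n + 2) → ℝ,
      0 ≤ ∏ j : Fin (n + 2), |x j - x (cyc (n + 2) (by omega) j)| ^ β := fun n x =>
    Finset.prod_nonneg fun j _ => Real.rpow_nonneg (abs_nonneg _) _
  have key : ∀ n : ℕ,
      ∫⁻ x : Fin (n + 2) → ℝ in Set.univ.pi fun _ => Set.Icc s t,
          ENNReal.ofReal (∏ j : Fin (n + 2), |x j - x (cyc (n + 2) (by omega) j)| ^ β)
        ≤ ENNReal.ofReal (C ^ (n + 2)) := by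
    intro n
    have h1 : (volume : Measure (Fin (n + 2) → ℝ)).restrict
        (Set.univ.pi fun _ => Set.Icc s t)
          = Measure.pi fun _ : Fin (n + 2) => volume.restrict (Icc s t) := by
      rw [volume_pi, restrict_pi _ _ measurableSet_Icc]
    rw [h1]
    have h2 : ∀ x : Fin (n + 2) → ℝ,
        ENNReal.ofReal (∏ j : Fin (n + 2), |x j - x (cyc (n + 2) (by omega) j)| ^ β)
          = ∏ j : Fin (n + 2), ker β (x j) (x (cyc (n + 2) (by omega) j)) := fun x =>
      ENNReal.ofReal_prod_of_nonneg fun j _ => Real.rpow_nonneg (abs_nonneg _) _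
    simp_rw [h2]
    refine le_trans (cycle_bound β s t hβ1 hβ2 hβ0 n) ?_
    rw [← hLdef, ← hb1, ← hb2]
    rw [← ENNReal.ofReal_add hb2nn hb2nn, ← ENNReal.ofReal_pow hb1nn,
      ← ENNReal.ofReal_mul (by positivity), ← ENNReal.ofReal_mul hL.le]
    apply ENNReal.ofReal_le_ofReal
    have e1 : b1 ^ n ≤ (max b1 1) ^ (n + 2) := by
      refine le_trans (pow_le_pow_left₀ hb1nn (le_max_left b1 1) n) ?_
      exact pow_le_pow_right₀ (le_max_right _ _) (by omega)
    have e2 : L * (b2 + b2) ≤ (max (L * (2 * b2)) 1) ^ (n + 2) := by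
      have h : L * (b2 + b2) = L * (2 * b2) := by ring
      rw [h]
      exact le_trans (le_max_left _ _) (le_self_pow₀ (le_max_right _ _) (by omega))
    calc L * ((b2 + b2) * b1 ^ n) = (L * (b2 + b2)) * b1 ^ n := by ring
      _ ≤ (max (L * (2 * b2)) 1) ^ (n + 2) * (max b1 1) ^ (n + 2) :=
          mul_le_mul e2 e1 (pow_nonneg hb1nn n) (by positivity)
      _ = C ^ (n + 2) := by rw [hC, mul_pow]; ring
  constructor
  · intro k hk
    obtain ⟨n, rfl⟩ : ∃ n, k = n + 2 := ⟨k - 2, by omega⟩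
    refine ⟨((hmeas n).aestronglyMeasurable), ?_⟩
    rw [hasFiniteIntegral_iff_ofReal (ae_of_all _ (hnn n))]
    exact lt_of_le_of_lt (key n) ENNReal.ofReal_lt_top
  · refine ⟨C, hCpos, ?_⟩
    intro k hk
    obtain ⟨n, rfl⟩ : ∃ n, k = n + 2 := ⟨k - 2, by omega⟩
    rw [integral_eq_lintegral_of_nonneg_ae (ae_of_all _ (hnn n))
      ((hmeas n).aestronglyMeasurable)]
    exact ENNReal.toReal_le_of_le_ofReal (by positivity) (key n)
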